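/- Let Φ : X → L(H,K) and Ψ : X → L(H,K') be completely positive maps on a full Hilbert A-module X with the same underlying completely positive map φ : A → L(H). Then for all x₁,...,x_n ∈ X and h₁,...,h_n ∈ H, ‖Σᵢ Φ(xᵢ)hᵢ‖ = ‖Σᵢ Ψ(xᵢ)hᵢ‖; consequently there is a unique unitary operator U from [Φ(X)H] onto [Ψ(X)H] with U(Φ(x)h) = Ψ(x)h for all x ∈ X, h ∈ H. -/

import Mathlib

noncomputable section

open ContinuousLinearMap

/-- An element of the form `star c * c` (positivity in a star ring). -/
def StarPos {B : Type*} [Mul B] [Star B] (b : B) : Prop := ∃ c : B, b = star c * c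

/-- Complete positivity of a `ℂ`-linear map between star rings. -/
def IsCPMap {A B : Type*} [NonUnitalRing A] [StarRing A] [Module ℂ A]
    [NonUnitalRing B] [StarRing B] [Module ℂ B] (φ : A →ₗ[ℂ] B) : Prop :=
  ∀ (n : ℕ) (M : Matrix (Fin n) (Fin n) A), StarPos M → StarPos (M.map ⇑φ)

open scoped InnerProductSpace

set_option linter.unusedSectionVars false
set_option linter.unusedVariables false

namespace Stmt9Aux

variable {K K' : Type*} [NormedAddCommGroup K] [NormedSpace ℂ K] [CompleteSpace K]
  [NormedAddCommGroup K'] [NormedSpace ℂ K'] [CompleteSpace K']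


variable {K K' : Type*} [NormedAddCommGroup K] [NormedSpace ℂ K] [CompleteSpace K]
  [NormedAddCommGroup K'] [NormedSpace ℂ K'] [CompleteSpace K']

def incl (S : Submodule ℂ K) : S →ₗᵢ[ℂ] S.topologicalClosure :=
  ⟨Submodule.inclusion S.le_topologicalClosure, fun _ => rfl⟩

theorem incl_denseRange (S : Submodule ℂ K) : DenseRange (incl S) := by
  intro x
  rw [closure_subtype]
  have him : (Subtype.val '' Set.range (incl S)) = (S : Set K) := by
    ext k
    constructor
    · rintro ⟨m, ⟨s, rfl⟩, rfl⟩; exact s.2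
    · intro hk; exact ⟨incl S ⟨k, hk⟩, ⟨⟨k, hk⟩, rfl⟩, rfl⟩
  rw [him, ← S.topologicalClosure_coe]
  exact x.2

theorem extend_exists (S : Submodule ℂ K) (T : Submodule ℂ K') (F : S ≃ₗᵢ[ℂ] T) :
    ∃ U : (S.topologicalClosure ≃ₗᵢ[ℂ] T.topologicalClosure),
      ∀ s : S, (U ⟨(s : K), S.le_topologicalClosure s.2⟩ : K') = (F s : K') := by
  haveI : CompleteSpace S.topologicalClosure := S.isClosed_topologicalClosure.completeSpace_coe
  haveI : CompleteSpace T.topologicalClosure := T.isClosed_topologicalClosure.completeSpace_coe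
  set e : S →L[ℂ] S.topologicalClosure := (incl S).toContinuousLinearMap with he_def
  set e' : T →L[ℂ] T.topologicalClosure := (incl T).toContinuousLinearMap with he'_def
  have h_dense : DenseRange e := incl_denseRange S
  have h_dense' : DenseRange e' := incl_denseRange T
  have h_e : IsUniformInducing e := (incl S).isometry.isUniformInducing
  have h_e' : IsUniformInducing e' := (incl T).isometry.isUniformInducing
  set f : S →L[ℂ] T.topologicalClosure := ((incl T).comp F.toLinearIsometry).toContinuousLinearMap
    with hf_def
  set f' : T →L[ℂ] S.topologicalClosure :=
    ((incl S).comp F.symm.toLinearIsometry).toContinuousLinearMap with hf'_def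
  set g : S.topologicalClosure →L[ℂ] T.topologicalClosure := f.extend e with hg_def
  set g' : T.topologicalClosure →L[ℂ] S.topologicalClosure := f'.extend e'
    with hg'_def
  have hg : ∀ s : S, g (e s) = f s := fun s => ContinuousLinearMap.extend_eq (f := f) (e := e) h_dense h_e s
  have hg' : ∀ t : T, g' (e' t) = f' t := fun t =>
    ContinuousLinearMap.extend_eq (f := f') (e := e') h_dense' h_e' t
  have hfe : ∀ s : S, f s = e' (F s) := fun s => rfl
  have hf'e : ∀ t : T, f' t = e (F.symm t) := fun t => rfl
  have hgg' : ∀ m, g' (g m) = m := by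
    intro m
    refine h_dense.induction_on m ?_ ?_
    · exact isClosed_eq (g'.continuous.comp g.continuous) continuous_id
    · intro s
      rw [hg, hfe, hg', hf'e, F.symm_apply_apply]
  have hg'g : ∀ n, g (g' n) = n := by
    intro n
    refine h_dense'.induction_on n ?_ ?_
    · exact isClosed_eq (g.continuous.comp g'.continuous) continuous_id
    · intro t
      rw [hg', hf'e, hg, hfe, F.apply_symm_apply]
  have hnorm : ∀ m, ‖g m‖ = ‖m‖ := by
    intro m
    refine h_dense.induction_on m ?_ ?_
    · exact isClosed_eq g.continuous.norm continuous_norm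
    · intro s
      rw [hg]
      have h1 : ‖f s‖ = ‖F s‖ := rfl
      have h2 : ‖e s‖ = ‖s‖ := rfl
      rw [h1, h2, F.norm_map]
  refine ⟨{ toLinearEquiv := LinearEquiv.ofLinear g.toLinearMap g'.toLinearMap
              (LinearMap.ext hg'g) (LinearMap.ext hgg')
            norm_map' := hnorm }, ?_⟩
  intro s
  have h3 : (⟨(s : K), S.le_topologicalClosure s.2⟩ : S.topologicalClosure) = e s := rfl
  show (g (⟨(s : K), S.le_topologicalClosure s.2⟩ : S.topologicalClosure) : K') = (F s : K')
  rw [h3, hg, hfe]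
  rfl

end Stmt9Aux

/-- two completely positive maps `Φ`, `Ψ` on a full Hilbert `A`-module
with the same underlying completely positive map `φ` satisfy
`‖Σ Φ(xᵢ)hᵢ‖ = ‖Σ Ψ(xᵢ)hᵢ‖`, and there is a unique unitary
`U : [Φ(X)H] → [Ψ(X)H]` with `U(Φ(x)h) = Ψ(x)h`. -/
theorem stmt_9
    {A : Type*} [NormedRing A] [StarRing A] [CStarRing A] [NormedAlgebra ℂ A]
    [CompleteSpace A] [StarModule ℂ A]
    {H K K' : Type*} [NormedAddCommGroup H] [InnerProductSpace ℂ H] [CompleteSpace H]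
    [NormedAddCommGroup K] [InnerProductSpace ℂ K] [CompleteSpace K]
    [NormedAddCommGroup K'] [InnerProductSpace ℂ K'] [CompleteSpace K']
    {X : Type*} (E : X → X → A)
    (hfull : (Submodule.span ℂ {a : A | ∃ x y, a = E x y}).topologicalClosure = ⊤)
    (Φ : X → H →L[ℂ] K) (Ψ : X → H →L[ℂ] K')
    (φ : A →ₗ[ℂ] (H →L[ℂ] H)) (hcp : IsCPMap φ)
    (hΦ : ∀ x y, adjoint (Φ x) ∘L Φ y = φ (E x y))
    (hΨ : ∀ x y, adjoint (Ψ x) ∘L Ψ y = φ (E x y)) :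
    (∀ (n : ℕ) (xs : Fin n → X) (hs : Fin n → H),
        ‖∑ i, Φ (xs i) (hs i)‖ = ‖∑ i, Ψ (xs i) (hs i)‖) ∧
      ∃! U : ((Submodule.span ℂ {k : K | ∃ x h, k = Φ x h}).topologicalClosure ≃ₗᵢ[ℂ]
          (Submodule.span ℂ {k : K' | ∃ x h, k = Ψ x h}).topologicalClosure),
        ∀ x h,
          (U ⟨Φ x h,
              Submodule.le_topologicalClosure _
                (Submodule.subset_span ⟨x, h, rfl⟩)⟩ : K') = Ψ x h := by
  classical
  set SΦ : Set K := {k : K | ∃ x h, k = Φ x h} with hSΦ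
  set SΨ : Set K' := {k : K' | ∃ x h, k = Ψ x h} with hSΨ
  set SW : Set (K × K') := {p : K × K' | ∃ x h, p = (Φ x h, Ψ x h)} with hSW
  set W : Submodule ℂ (K × K') := Submodule.span ℂ SW with hW
  -- key inner product identity on W
  have key : ∀ p ∈ W, ∀ q ∈ W, (inner ℂ p.1 q.1 : ℂ) = inner ℂ p.2 q.2 := by
    intro p hp q hq
    induction hp, hq using Submodule.span_induction₂ with
    | mem_mem p q hp hq =>
      obtain ⟨x, h, rfl⟩ := hp
      obtain ⟨y, h', rfl⟩ := hq
      have h1 : (inner ℂ (Φ x h) (Φ y h') : ℂ) = inner ℂ h ((φ (E x y)) h') := by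
        rw [← hΦ x y]
        exact (ContinuousLinearMap.adjoint_inner_right (Φ x) h (Φ y h')).symm
      have h2 : (inner ℂ (Ψ x h) (Ψ y h') : ℂ) = inner ℂ h ((φ (E x y)) h') := by
        rw [← hΨ x y]
        exact (ContinuousLinearMap.adjoint_inner_right (Ψ x) h (Ψ y h')).symm
      exact h1.trans h2.symm
    | zero_left q hq => simp
    | zero_right p hp => simp
    | add_left p p' q hp hp' hq h1 h2 => simp [inner_add_left, h1, h2]
    | add_right p q q' hp hq hq' h1 h2 => simp [inner_add_right, h1, h2]
    | smul_left c p q hp hq h1 => simp [inner_smul_left, h1]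
    | smul_right c p q hp hq h1 => simp [inner_smul_right, h1]
  have keynorm : ∀ p ∈ W, ‖p.1‖ = ‖p.2‖ := by
    intro p hp
    have h1 := key p hp p hp
    rw [inner_self_eq_norm_sq_to_K, inner_self_eq_norm_sq_to_K] at h1
    have h2 : (‖p.1‖ : ℂ) ^ 2 = (‖p.2‖ : ℂ) ^ 2 := h1
    have h3 : ‖p.1‖ ^ 2 = ‖p.2‖ ^ 2 := by exact_mod_cast h2
    nlinarith [norm_nonneg p.1, norm_nonneg p.2]
  constructor
  · intro n xs hs
    have hmem : (∑ i, (Φ (xs i) (hs i), Ψ (xs i) (hs i))) ∈ W :=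
      Submodule.sum_mem _ fun i _ => Submodule.subset_span ⟨xs i, hs i, rfl⟩
    have := keynorm _ hmem
    simpa [Prod.fst_sum, Prod.snd_sum] using this
  -- construct the isometry on the spans
  set p1 : W →ₗ[ℂ] K := (LinearMap.fst ℂ K K').comp W.subtype with hp1
  set p2 : W →ₗ[ℂ] K' := (LinearMap.snd ℂ K K').comp W.subtype with hp2
  have hinj1 : Function.Injective p1 := by
    rw [← LinearMap.ker_eq_bot, LinearMap.ker_eq_bot']
    intro w hw
    have h0 : (w : K × K').1 = 0 := hw
    have h2 : ‖(w : K × K').2‖ = 0 := by rw [← keynorm _ w.2, h0, norm_zero]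
    have h2' : (w : K × K').2 = 0 := norm_eq_zero.mp h2
    exact Subtype.ext (Prod.ext h0 h2')
  have hinj2 : Function.Injective p2 := by
    rw [← LinearMap.ker_eq_bot, LinearMap.ker_eq_bot']
    intro w hw
    have h0 : (w : K × K').2 = 0 := hw
    have h2 : ‖(w : K × K').1‖ = 0 := by rw [keynorm _ w.2, h0, norm_zero]
    have h2' : (w : K × K').1 = 0 := norm_eq_zero.mp h2
    exact Subtype.ext (Prod.ext h2' h0)
  have hrange1 : LinearMap.range p1 = Submodule.span ℂ SΦ := by
    rw [hp1, LinearMap.range_comp, Submodule.range_subtype, hW, Submodule.map_span]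
    congr 1
    ext k
    constructor
    · rintro ⟨p, ⟨x, h, rfl⟩, rfl⟩; exact ⟨x, h, rfl⟩
    · rintro ⟨x, h, rfl⟩; exact ⟨(Φ x h, Ψ x h), ⟨x, h, rfl⟩, rfl⟩
  have hrange2 : LinearMap.range p2 = Submodule.span ℂ SΨ := by
    rw [hp2, LinearMap.range_comp, Submodule.range_subtype, hW, Submodule.map_span]
    congr 1
    ext k
    constructor
    · rintro ⟨p, ⟨x, h, rfl⟩, rfl⟩; exact ⟨x, h, rfl⟩
    · rintro ⟨x, h, rfl⟩; exact ⟨(Φ x h, Ψ x h), ⟨x, h, rfl⟩, rfl⟩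
  set e1 : W ≃ₗ[ℂ] Submodule.span ℂ SΦ :=
    (LinearEquiv.ofInjective p1 hinj1).trans (LinearEquiv.ofEq _ _ hrange1) with he1
  set e2 : W ≃ₗ[ℂ] Submodule.span ℂ SΨ :=
    (LinearEquiv.ofInjective p2 hinj2).trans (LinearEquiv.ofEq _ _ hrange2) with he2
  have he1coe : ∀ w : W, ((e1 w : Submodule.span ℂ SΦ) : K) = (w : K × K').1 := fun w => rfl
  have he2coe : ∀ w : W, ((e2 w : Submodule.span ℂ SΨ) : K') = (w : K × K').2 := fun w => rfl
  set F : (Submodule.span ℂ SΦ) ≃ₗᵢ[ℂ] (Submodule.span ℂ SΨ) :=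
    { toLinearEquiv := e1.symm.trans e2
      norm_map' := fun v => by
        show ‖(e2 (e1.symm v) : K')‖ = ‖(v : K)‖
        have h1 : ((e1 (e1.symm v) : Submodule.span ℂ SΦ) : K) = ((e1.symm v : W) : K × K').1 :=
          he1coe _
        rw [e1.apply_symm_apply] at h1
        rw [he2coe, ← keynorm _ (e1.symm v).2, ← h1] } with hF
  have hFcoe : ∀ v, ((F v : Submodule.span ℂ SΨ) : K') = ((e1.symm v : W) : K × K').2 :=
    fun v => rfl
  have hFgen : ∀ (x : X) (h : H),
      ((F ⟨Φ x h, Submodule.subset_span ⟨x, h, rfl⟩⟩ : Submodule.span ℂ SΨ) : K') = Ψ x h := by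
    intro x h
    set w : W := ⟨(Φ x h, Ψ x h), Submodule.subset_span ⟨x, h, rfl⟩⟩ with hw
    have h1 : e1 w = ⟨Φ x h, Submodule.subset_span ⟨x, h, rfl⟩⟩ := Subtype.ext (he1coe w)
    rw [← h1, hFcoe, e1.symm_apply_apply]
  obtain ⟨U, hU⟩ := Stmt9Aux.extend_exists (Submodule.span ℂ SΦ) (Submodule.span ℂ SΨ) F
  refine ⟨U, ?_, ?_⟩
  · intro x h
    have := hU ⟨Φ x h, Submodule.subset_span ⟨x, h, rfl⟩⟩
    rw [this, hFgen]
  · intro U' hU'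
    have hU0 : ∀ (x : X) (h : H),
        (U ⟨Φ x h, Submodule.le_topologicalClosure _
          (Submodule.subset_span ⟨x, h, rfl⟩)⟩ : K') = Ψ x h := by
      intro x h
      have := hU ⟨Φ x h, Submodule.subset_span ⟨x, h, rfl⟩⟩
      rw [this, hFgen]
    apply LinearIsometryEquiv.ext
    intro m
    refine (Stmt9Aux.incl_denseRange (Submodule.span ℂ SΦ)).induction_on m ?_ ?_
    · exact isClosed_eq U'.continuous U.continuous
    · rintro ⟨k, hk⟩
      show U' ⟨k, Submodule.le_topologicalClosure _ hk⟩ = U ⟨k, Submodule.le_topologicalClosure _ hk⟩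
      induction hk using Submodule.span_induction with
      | mem k hk =>
        obtain ⟨x, h, rfl⟩ := hk
        exact Subtype.ext ((hU' x h).trans (hU0 x h).symm)
      | zero =>
        have h0 : (⟨(0 : K), Submodule.le_topologicalClosure _ (Submodule.zero_mem _)⟩ :
            (Submodule.span ℂ SΦ).topologicalClosure) = 0 := rfl
        rw [h0, map_zero, map_zero]
      | add a b ha hb iha ihb =>
        have hab : (⟨a + b, Submodule.le_topologicalClosure _ (Submodule.add_mem _ ha hb)⟩ :
            (Submodule.span ℂ SΦ).topologicalClosure) =
            ⟨a, Submodule.le_topologicalClosure _ ha⟩ +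
            ⟨b, Submodule.le_topologicalClosure _ hb⟩ := rfl
        rw [hab, map_add, map_add, iha, ihb]
      | smul c a ha iha =>
        have hca : (⟨c • a, Submodule.le_topologicalClosure _ (Submodule.smul_mem _ c ha)⟩ :
            (Submodule.span ℂ SΦ).topologicalClosure) =
            c • ⟨a, Submodule.le_topologicalClosure _ ha⟩ := rfl
        rw [hca, map_smul, map_smul, iha]
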